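/- Let F, Z, m be integers with 0 ≤ Z < F and m ≥ 1. Then a (m·C(F,Z), F, Z, m·C(F,Z+1))-PDA exists, and no (m·C(F,Z)+1, F, Z, m·C(F,Z+1))-PDA exists; that is, K_{(F,F−Z,m·C(F,Z+1))} = m·C(F,Z), where C(n,k) denotes the binomial coefficient. -/

import Mathlib

/-- A `(K, F, Z, S)` placement delivery array: an `F × K` array over
`{0, …, S-1} ∪ {*}` (with `none` playing the role of `*`) such that
(1) each integer occurs at most once in each row and in each column,
(2) whenever two distinct cells `(a, b)` and `(c, d)` contain the same
integer, the opposite corners `(a, d)` and `(c, b)` contain `*`, and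
(3) the symbol `*` occurs exactly `Z` times in each column. -/
def IsPDA (K F Z S : ℕ) (P : Fin F → Fin K → Option (Fin S)) : Prop :=
  (∀ (i : Fin F) (j j' : Fin K) (s : Fin S), P i j = some s → P i j' = some s → j = j') ∧
  (∀ (i i' : Fin F) (j : Fin K) (s : Fin S), P i j = some s → P i' j = some s → i = i') ∧
  (∀ (a c : Fin F) (b d : Fin K) (s : Fin S),
      (a, b) ≠ (c, d) → P a b = some s → P c d = some s →
      P a d = none ∧ P c b = none) ∧
  (∀ j : Fin K, (Finset.univ.filter (fun i => P i j = none)).card = Z)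

/-- There exists a `(K, F, Z, S)` placement delivery array. -/
def PDAExists (K F Z S : ℕ) : Prop :=
  ∃ P : Fin F → Fin K → Option (Fin S), IsPDA K F Z S P

theorem pda_optimal_multiple_binomial (F Z m : ℕ) (hZF : Z < F) (hm : 1 ≤ m) :
    PDAExists (m * F.choose Z) F Z (m * F.choose (Z + 1)) ∧
      ¬ PDAExists (m * F.choose Z + 1) F Z (m * F.choose (Z + 1)) := by
  constructor
  · -- existence: MN-type construction, m disjoint copies
    obtain ⟨eK⟩ : Nonempty (Fin (m * F.choose Z) ≃ Fin m × {B : Finset (Fin F) // B.card = Z}) :=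
      ⟨(Fintype.equivFinOfCardEq (by simp)).symm⟩
    obtain ⟨eS⟩ : Nonempty ((Fin m × {T : Finset (Fin F) // T.card = Z + 1}) ≃
        Fin (m * F.choose (Z + 1))) :=
      ⟨Fintype.equivFinOfCardEq (by simp)⟩
    refine ⟨fun i j => if h : i ∈ (eK j).2.1 then none else
        some (eS ⟨(eK j).1, ⟨insert i (eK j).2.1,
          by rw [Finset.card_insert_of_notMem h, (eK j).2.2]⟩⟩), ?_, ?_, ?_, ?_⟩
    · intro i j j' s h1 h2
      dsimp only at h1 h2
      by_cases hb : i ∈ (eK j).2.1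
      · rw [dif_pos hb] at h1; exact absurd h1 (by simp)
      by_cases hd : i ∈ (eK j').2.1
      · rw [dif_pos hd] at h2; exact absurd h2 (by simp)
      rw [dif_neg hb] at h1
      rw [dif_neg hd] at h2
      have := eS.injective (Option.some.inj (h1.trans h2.symm))
      simp only [Prod.mk.injEq, Subtype.mk.injEq] at this
      obtain ⟨hc, hT⟩ := this
      have hB : (eK j).2.1 = (eK j').2.1 := by
        have := congrArg (fun T => Finset.erase T i) hT
        simpa [Finset.erase_insert hb, Finset.erase_insert hd] using this
      apply eK.injective
      exact Prod.ext hc (Subtype.ext hB)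
    · intro i i' j s h1 h2
      dsimp only at h1 h2
      by_cases hb : i ∈ (eK j).2.1
      · rw [dif_pos hb] at h1; exact absurd h1 (by simp)
      by_cases hd : i' ∈ (eK j).2.1
      · rw [dif_pos hd] at h2; exact absurd h2 (by simp)
      rw [dif_neg hb] at h1
      rw [dif_neg hd] at h2
      have := eS.injective (Option.some.inj (h1.trans h2.symm))
      simp only [Prod.mk.injEq, Subtype.mk.injEq] at this
      obtain ⟨hc, hT⟩ := this
      have : i ∈ insert i' (eK j).2.1 := hT ▸ Finset.mem_insert_self i _
      rcases Finset.mem_insert.mp this with h | h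
      · exact h
      · exact absurd h hb
    · intro a c b d s hne h1 h2
      dsimp only at h1 h2
      by_cases hb : a ∈ (eK b).2.1
      · rw [dif_pos hb] at h1; exact absurd h1 (by simp)
      by_cases hd : c ∈ (eK d).2.1
      · rw [dif_pos hd] at h2; exact absurd h2 (by simp)
      rw [dif_neg hb] at h1
      rw [dif_neg hd] at h2
      have heq := eS.injective (Option.some.inj (h1.trans h2.symm))
      simp only [Prod.mk.injEq, Subtype.mk.injEq] at heq
      obtain ⟨hc1, hT⟩ := heq
      have hac : a ≠ c := by
        intro hac
        subst hac
        have hB : (eK b).2.1 = (eK d).2.1 := by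
          have := congrArg (fun T => Finset.erase T a) hT
          simpa [Finset.erase_insert hb, Finset.erase_insert hd] using this
        have : b = d := eK.injective (Prod.ext hc1 (Subtype.ext hB))
        exact hne (by rw [this])
      have haD : a ∈ (eK d).2.1 := by
        have : a ∈ insert c (eK d).2.1 := hT ▸ Finset.mem_insert_self a _
        rcases Finset.mem_insert.mp this with h | h
        · exact absurd h hac
        · exact h
      have hcB : c ∈ (eK b).2.1 := by
        have : c ∈ insert a (eK b).2.1 := hT ▸ Finset.mem_insert_self c _
        rcases Finset.mem_insert.mp this with h | h
        · exact absurd h.symm hac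
        · exact h
      exact ⟨dif_pos haD, dif_pos hcB⟩
    · intro j
      dsimp only
      have : (Finset.univ.filter (fun i =>
          (if h : i ∈ (eK j).2.1 then none else
            some (eS ⟨(eK j).1, ⟨insert i (eK j).2.1,
              by rw [Finset.card_insert_of_notMem h, (eK j).2.2]⟩⟩)) = none)) = (eK j).2.1 := by
        ext i
        simp only [Finset.mem_filter, Finset.mem_univ, true_and]
        by_cases h : i ∈ (eK j).2.1 <;> simp [h]
      rw [this, (eK j).2.2]
  · -- impossibility: double counting
    rintro ⟨P, h1, h2, h3, h4⟩
    have hS : 0 < m * F.choose (Z + 1) := Nat.mul_pos hm (Nat.choose_pos hZF)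
    classical
    set cells : Finset (Fin F × Fin (m * F.choose Z + 1)) :=
      Finset.univ.filter (fun p => (P p.1 p.2).isSome) with hcells
    have hfib : ∀ j : Fin (m * F.choose Z + 1), (cells.filter fun p => p.2 = j).card = F - Z := by
      intro j
      have hrow : (Finset.univ.filter fun i => (P i j).isSome).card = F - Z := by
        have hzz := Finset.card_filter_add_card_filter_not
          (s := (Finset.univ : Finset (Fin F))) (p := fun i => P i j = none)
        rw [h4 j] at hzz
        have heq : (Finset.univ.filter fun i => ¬ P i j = none) =
            (Finset.univ.filter fun i => (P i j).isSome) := by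
          apply Finset.filter_congr
          intro i _
          simp [Option.isSome_iff_ne_none]
        rw [heq] at hzz
        simp only [Finset.card_univ, Fintype.card_fin] at hzz
        omega
      rw [← hrow]
      apply Finset.card_bij (fun p _ => p.1)
      · intro p hp
        simp only [hcells, Finset.mem_filter, Finset.mem_univ, true_and] at hp ⊢
        rw [← hp.2]
        exact hp.1
      · intro p hp q hq hpq
        simp only [Finset.mem_filter] at hp hq
        exact Prod.ext hpq (hp.2.trans hq.2.symm)
      · intro i hi
        simp only [Finset.mem_filter, Finset.mem_univ, true_and] at hi
        exact ⟨(i, j), by simp [hcells, hi], rfl⟩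
    have hcol : cells.card = (m * F.choose Z + 1) * (F - Z) := by
      rw [Finset.card_eq_sum_card_fiberwise (f := fun p => p.2)
        (t := Finset.univ) (fun p _ => Finset.mem_univ p.2)]
      rw [Finset.sum_congr rfl (fun j _ => hfib j)]
      simp [mul_comm]
    have hval : cells.card = ∑ s : Fin (m * F.choose (Z + 1)), (cells.filter fun p => P p.1 p.2 = some s).card := by
      rw [Finset.card_eq_sum_card_fiberwise (f := fun p => (P p.1 p.2).getD ⟨0, hS⟩)
        (t := Finset.univ) (fun p _ => Finset.mem_univ _)]
      apply Finset.sum_congr rfl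
      intro s _
      congr 1
      apply Finset.filter_congr
      intro p hp
      simp only [hcells, Finset.mem_filter, Finset.mem_univ, true_and] at hp
      obtain ⟨t, ht⟩ := Option.isSome_iff_exists.mp hp
      simp [ht]
    have hbound : ∀ s : Fin (m * F.choose (Z + 1)), (cells.filter fun p => P p.1 p.2 = some s).card ≤ Z + 1 := by
      intro s
      set A := cells.filter fun p => P p.1 p.2 = some s with hA
      have hmem : ∀ p ∈ A, P p.1 p.2 = some s := fun p hp => (Finset.mem_filter.mp hp).2
      rcases A.eq_empty_or_nonempty with h | ⟨p0, hp0⟩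
      · rw [h]; simp
      · have hsub : (A.erase p0).card ≤
            (Finset.univ.filter fun i => P i p0.2 = none).card := by
          apply Finset.card_le_card_of_injOn (fun p => p.1)
          · intro p hp
            have hpA := Finset.mem_of_mem_erase hp
            have hpne := Finset.ne_of_mem_erase hp
            have hne2 : (p.1, p.2) ≠ (p0.1, p0.2) := fun h => hpne (by
              have : p = p0 := by
                calc p = (p.1, p.2) := rfl
                _ = (p0.1, p0.2) := h
                _ = p0 := rfl
              exact this)
            have := h3 p.1 p0.1 p.2 p0.2 s hne2 (hmem p hpA) (hmem p0 hp0)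
            simp only [Finset.mem_filter, Finset.mem_univ, true_and]
            simpa using this.1
          · intro p hp q hq hpq
            have hpA := Finset.mem_of_mem_erase hp
            have hqA := Finset.mem_of_mem_erase hq
            have hp2 := hmem p hpA
            have hq2 := hmem q hqA
            have hpq' : p.1 = q.1 := hpq
            rw [hpq'] at hp2
            exact Prod.ext hpq' (h1 q.1 p.2 q.2 s hp2 hq2)
        rw [h4 p0.2] at hsub
        have hc := Finset.card_erase_of_mem hp0
        have hpos : 1 ≤ A.card := Finset.card_pos.mpr ⟨p0, hp0⟩
        omega
    have hle : cells.card ≤ m * F.choose (Z + 1) * (Z + 1) := by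
      rw [hval]
      calc ∑ s : Fin (m * F.choose (Z + 1)), (cells.filter fun p => P p.1 p.2 = some s).card
          ≤ ∑ _s : Fin (m * F.choose (Z + 1)), (Z + 1) := Finset.sum_le_sum (fun s _ => hbound s)
        _ = m * F.choose (Z + 1) * (Z + 1) := by simp [mul_comm]
    rw [hcol] at hle
    have hid : m * F.choose (Z + 1) * (Z + 1) = m * F.choose Z * (F - Z) := by
      rw [mul_assoc, Nat.choose_succ_right_eq, mul_assoc]
    rw [hid] at hle
    have hFZ : 0 < F - Z := by omega
    nlinarith [hle, hFZ]
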